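/- For 1 ≤ p < ∞, for every y ∈ ℓ_p and every weakly null sequence (y_n) in ℓ_p one has limsup_n ‖y + y_n‖ = limsup_n (‖y‖^p + ‖y_n‖^p)^{1/p}. -/

import Mathlib

open Filter Topology NormedSpace ENNReal MeasureTheory

noncomputable section

/-- A sequence in `X` is weakly null if it tends to zero in the weak topology,
i.e. `f (xs n) → 0` for every continuous linear functional `f`. -/
def WeaklyNull {X : Type*} [NormedAddCommGroup X] [NormedSpace ℝ X] (xs : ℕ → X) : Prop :=
  ∀ f : StrongDual ℝ X, Tendsto (fun n => f (xs n)) atTop (𝓝 0)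

/-- The annihilator `J^⊥` of a subspace `J` in the continuous dual. -/
def annih {Z : Type*} [NormedAddCommGroup Z] [NormedSpace ℝ Z] (J : Submodule ℝ Z) :
    Submodule ℝ (StrongDual ℝ Z) where
  carrier := {f | ∀ x ∈ J, f x = 0}
  add_mem' := by
    intro f g hf hg x hx
    simp [hf x hx, hg x hx]
  zero_mem' := by intro x hx; rfl
  smul_mem' := by
    intro c f hf x hx
    simp [hf x hx]

/-- `J` is an M-ideal in `Z`: there is a closed subspace `V` of the dual such that
`Z* = J^⊥ ⊕₁ V` (algebraic direct sum with additive norm). -/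
def IsMIdeal {Z : Type*} [NormedAddCommGroup Z] [NormedSpace ℝ Z] (J : Submodule ℝ Z) : Prop :=
  ∃ V : Submodule ℝ (StrongDual ℝ Z), IsClosed (V : Set (StrongDual ℝ Z)) ∧
    (∀ f : StrongDual ℝ Z, ∃ g ∈ annih J, ∃ h ∈ V, f = g + h) ∧
    annih J ⊓ V = ⊥ ∧
    ∀ g ∈ annih J, ∀ h ∈ V, ‖g + h‖ = ‖g‖ + ‖h‖

/-- Conditions (a)–(c) on a sequence of compact operators `K n` on `X`:
(a) `K n x → x` for all `x`; (b) `(K n)* f → f` in norm for every `f ∈ X*`;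
(c) `‖Id − 2 K n‖ → 1`. -/
def ABC {X : Type*} [NormedAddCommGroup X] [NormedSpace ℝ X] (K : ℕ → X →L[ℝ] X) : Prop :=
  (∀ n, IsCompactOperator (K n)) ∧
  (∀ x : X, Tendsto (fun n => (K n) x) atTop (𝓝 x)) ∧
  (∀ f : StrongDual ℝ X, Tendsto (fun n => f.comp (K n)) atTop (𝓝 f)) ∧
  Tendsto (fun n => ‖ContinuousLinearMap.id ℝ X - (2 : ℝ) • K n‖) atTop (𝓝 1)

/-- Inequality (7) for `X` and exponent `p`. -/
def Ineq7 (X : Type*) [NormedAddCommGroup X] [NormedSpace ℝ X] (p : ℝ) : Prop :=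
  ∀ (x : X) (xs : ℕ → X), WeaklyNull xs →
    limsup (fun n => (‖x‖ ^ p + ‖xs n‖ ^ p) ^ (1 / p)) atTop ≤
    limsup (fun n => ((‖x + xs n‖ ^ p + ‖x - xs n‖ ^ p) / 2) ^ (1 / p)) atTop

/-- For `1 ≤ p < ∞`, for every `y ∈ ℓ_p` and every weakly null sequence `(yₙ)` in `ℓ_p`,
`limsup ‖y + yₙ‖ = limsup (‖y‖^p + ‖yₙ‖^p)^{1/p}`. -/

lemma my_rpow_add_rpow_le_add {q : ℝ} (hq : 1 ≤ q) {a b : ℝ} (ha : 0 ≤ a) (hb : 0 ≤ b) :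
    (a ^ q + b ^ q) ^ (1 / q) ≤ a + b := by
  lift a to NNReal using ha
  lift b to NNReal using hb
  have h := NNReal.rpow_add_rpow_le_add a b hq
  rw [← NNReal.coe_le_coe] at h
  push_cast [NNReal.coe_rpow] at h ⊢
  exact h

lemma my_rpow_add_le_add_rpow {q : ℝ} (hq0 : 0 ≤ q) (hq1 : q ≤ 1) {a b : ℝ}
    (ha : 0 ≤ a) (hb : 0 ≤ b) : (a + b) ^ q ≤ a ^ q + b ^ q := by
  lift a to NNReal using ha
  lift b to NNReal using hb
  have h := NNReal.rpow_add_le_add_rpow a b hq0 hq1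
  rw [← NNReal.coe_le_coe] at h
  push_cast [NNReal.coe_rpow] at h ⊢
  exact h

lemma my_rpow_rpow_inv {q : ℝ} (hq : q ≠ 0) {a : ℝ} (ha : 0 ≤ a) : (a ^ q) ^ (1 / q) = a := by
  rw [← Real.rpow_mul ha, mul_one_div_cancel hq, Real.rpow_one]

/-- The coordinate evaluation functional on `ℓ_p`. -/
def coordFn (p : ℝ≥0∞) [Fact (1 ≤ p)] (i : ℕ) :
    StrongDual ℝ (lp (fun _ : ℕ => ℝ) p) :=
  LinearMap.mkContinuous
    { toFun := fun x => x i
      map_add' := fun x y => by simp [lp.coeFn_add]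
      map_smul' := fun c x => by simp [lp.coeFn_smul] } 1
    (fun x => by
      have hp0 : p ≠ 0 := (lt_of_lt_of_le zero_lt_one (Fact.out : 1 ≤ p)).ne'
      rw [one_mul]; exact lp.norm_apply_le_norm hp0 x i)

/-- Truncation to the first `N` coordinates. -/
def headLp (p : ℝ≥0∞) [Fact (1 ≤ p)] (x : lp (fun _ : ℕ => ℝ) p) (N : ℕ) :
    lp (fun _ : ℕ => ℝ) p :=
  ⟨fun i => if i < N then x i else 0, by
    refine Memℓp.of_exponent_ge (q := 0) (memℓp_zero ?_) zero_le
    refine Set.Finite.subset (Set.finite_Iio N) ?_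
    intro i hi
    simp only [Set.mem_setOf_eq, ne_eq, ite_eq_right_iff, not_forall] at hi
    exact hi.1⟩

lemma headLp_apply (p : ℝ≥0∞) [Fact (1 ≤ p)] (x : lp (fun _ : ℕ => ℝ) p) (N i : ℕ) :
    (headLp p x N : ∀ _ : ℕ, ℝ) i = if i < N then x i else 0 := rfl

theorem lp_limsup_eq (p : ℝ≥0∞) [Fact (1 ≤ p)] (hp : p ≠ ∞) :
    ∀ (y : lp (fun _ : ℕ => ℝ) p) (ys : ℕ → lp (fun _ : ℕ => ℝ) p), WeaklyNull ys →
      limsup (fun n => ‖y + ys n‖) atTop =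
      limsup (fun n => (‖y‖ ^ p.toReal + ‖ys n‖ ^ p.toReal) ^ (1 / p.toReal)) atTop := by
  intro y ys hws
  set q := p.toReal with hqdef
  have hq1 : 1 ≤ q := by
    rw [hqdef, ← ENNReal.toReal_one]
    exact ENNReal.toReal_mono hp (Fact.out : 1 ≤ p)
  have hq0 : 0 < q := lt_of_lt_of_le zero_lt_one hq1
  -- coordinatewise convergence
  have hcoord : ∀ i, Tendsto (fun n => (ys n : ∀ _ : ℕ, ℝ) i) atTop (𝓝 0) :=
    fun i => hws (coordFn p i)
  -- boundedness of the weakly null sequence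
  obtain ⟨C, hC⟩ : ∃ C : ℝ, ∀ n, ‖ys n‖ ≤ C := by
    have hbdd : ∀ x : StrongDual ℝ (lp (fun _ : ℕ => ℝ) p), ∃ c : ℝ, ∀ n : ℕ,
        ‖(inclusionInDoubleDual ℝ (lp (fun _ : ℕ => ℝ) p) (ys n)) x‖ ≤ c := by
      intro f
      have h0 : Tendsto (fun n => ‖f (ys n)‖) atTop (𝓝 ‖(0 : ℝ)‖) := (hws f).norm
      obtain ⟨c, hc⟩ := h0.bddAbove_range
      refine ⟨c, fun n => ?_⟩
      simpa [dual_def] using hc (Set.mem_range_self n)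
    obtain ⟨C, hC⟩ := banach_steinhaus hbdd
    refine ⟨C, fun n => ?_⟩
    have := hC n
    rwa [show inclusionInDoubleDual ℝ (lp (fun _ : ℕ => ℝ) p) (ys n)
          = inclusionInDoubleDualLi ℝ (ys n) from rfl,
      (inclusionInDoubleDualLi ℝ).norm_map] at this
  -- disjoint supports give additivity of ‖·‖^q
  have hdisj : ∀ u v : lp (fun _ : ℕ => ℝ) p,
      (∀ i, (u : ∀ _ : ℕ, ℝ) i = 0 ∨ (v : ∀ _ : ℕ, ℝ) i = 0) →
      ‖u + v‖ ^ q = ‖u‖ ^ q + ‖v‖ ^ q := by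
    intro u v huv
    have h1 := lp.hasSum_norm hq0 (u + v)
    have h2 := (lp.hasSum_norm hq0 u).add (lp.hasSum_norm hq0 v)
    have he : (fun i => ‖(u + v : lp (fun _ : ℕ => ℝ) p) i‖ ^ q)
        = fun i => ‖(u : ∀ _ : ℕ, ℝ) i‖ ^ q + ‖(v : ∀ _ : ℕ, ℝ) i‖ ^ q := by
      funext i
      rcases huv i with h | h <;>
        simp [lp.coeFn_add, h, Real.zero_rpow hq0.ne']
    rw [he] at h1
    exact h1.unique h2
  -- norm of head as finite sum
  have hhead : ∀ (x : lp (fun _ : ℕ => ℝ) p) (N : ℕ),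
      ‖headLp p x N‖ ^ q = ∑ i ∈ Finset.range N, ‖(x : ∀ _ : ℕ, ℝ) i‖ ^ q := by
    intro x N
    refine (lp.hasSum_norm hq0 _).unique ?_
    have h0 : ∀ i ∉ Finset.range N,
        ‖(headLp p x N : ∀ _ : ℕ, ℝ) i‖ ^ q = 0 := by
      intro i hi
      rw [Finset.mem_range, not_lt] at hi
      rw [headLp_apply, if_neg (not_lt.2 hi)]
      simp [Real.zero_rpow hq0.ne']
    have h1 := hasSum_sum_of_ne_finset_zero (L := SummationFilter.unconditional ℕ) h0
    have h2 : ∑ i ∈ Finset.range N, ‖(headLp p x N : ∀ _ : ℕ, ℝ) i‖ ^ q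
        = ∑ i ∈ Finset.range N, ‖(x : ∀ _ : ℕ, ℝ) i‖ ^ q := by
      refine Finset.sum_congr rfl fun i hi => ?_
      rw [headLp_apply, if_pos (Finset.mem_range.1 hi)]
    rwa [h2] at h1
  -- splitting of the norm
  have hsplit : ∀ (x : lp (fun _ : ℕ => ℝ) p) (N : ℕ),
      ‖x‖ ^ q = ‖headLp p x N‖ ^ q + ‖x - headLp p x N‖ ^ q := by
    intro x N
    have h := hdisj (headLp p x N) (x - headLp p x N) ?_
    · have hx : headLp p x N + (x - headLp p x N) = x := by abel
      rw [← h, hx]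
    · intro i
      by_cases hi : i < N
      · right; simp [lp.coeFn_sub, headLp_apply, hi]
      · left; simp [headLp_apply, hi]
  -- tails of x are eventually small
  have htail : Tendsto (fun N => ‖y - headLp p y N‖) atTop (𝓝 0) := by
    have h1 : Tendsto (fun N => ‖y - headLp p y N‖ ^ q) atTop (𝓝 0) := by
      have hS := (lp.hasSum_norm hq0 y).tendsto_sum_nat
      have : (fun N => ‖y - headLp p y N‖ ^ q)
          = fun N => ‖y‖ ^ q - ∑ i ∈ Finset.range N, ‖(y : ∀ _ : ℕ, ℝ) i‖ ^ q := by
        funext N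
        have := hsplit y N
        rw [hhead] at this
        linarith
      have hS' : Tendsto (fun N => ‖y‖ ^ q - ∑ i ∈ Finset.range N, ‖(y : ∀ _ : ℕ, ℝ) i‖ ^ q)
          atTop (𝓝 (‖y‖ ^ q - ‖y‖ ^ q)) := tendsto_const_nhds.sub hS
      rw [sub_self] at hS'
      rw [this]
      exact hS'
    have h2 := h1.rpow_const (p := 1 / q) (Or.inr (by positivity))
    rw [Real.zero_rpow (by positivity : (1:ℝ)/q ≠ 0)] at h2
    refine h2.congr fun N => ?_
    exact my_rpow_rpow_inv hq0.ne' (norm_nonneg _)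
  -- heads of ys n tend to zero for fixed N
  have hheadys : ∀ N : ℕ, Tendsto (fun n => ‖headLp p (ys n) N‖) atTop (𝓝 0) := by
    intro N
    have h1 : Tendsto (fun n => ‖headLp p (ys n) N‖ ^ q) atTop (𝓝 0) := by
      have : Tendsto (fun n => ∑ i ∈ Finset.range N, ‖(ys n : ∀ _ : ℕ, ℝ) i‖ ^ q)
          atTop (𝓝 (∑ i ∈ Finset.range N, (0:ℝ))) := by
        refine tendsto_finset_sum _ fun i _ => ?_
        have := ((hcoord i).norm.rpow_const (p := q) (Or.inr hq0.le))
        simpa [Real.zero_rpow hq0.ne'] using this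
      simp only [Finset.sum_const, smul_zero, Finset.sum_const_zero] at this
      exact this.congr fun n => (hhead (ys n) N).symm
    have h2 := h1.rpow_const (p := 1 / q) (Or.inr (by positivity))
    rw [Real.zero_rpow (by positivity : (1:ℝ)/q ≠ 0)] at h2
    refine h2.congr fun n => ?_
    exact my_rpow_rpow_inv hq0.ne' (norm_nonneg _)
  -- the two sequences
  set f : ℕ → ℝ := fun n => ‖y + ys n‖ with hf
  set g : ℕ → ℝ := fun n => (‖y‖ ^ q + ‖ys n‖ ^ q) ^ (1 / q) with hg
  -- main pointwise estimate
  have hmain : ∀ (N n : ℕ),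
      f n ≤ g n + (‖y - headLp p y N‖ + ‖headLp p (ys n) N‖) ∧
      g n ≤ f n + 2 * (‖y - headLp p y N‖ + ‖headLp p (ys n) N‖) := by
    intro N n
    set u := headLp p y N
    set u' := y - headLp p y N
    set v := headLp p (ys n) N
    set v' := ys n - headLp p (ys n) N
    have hdisj1 : ∀ i, (u : ∀ _ : ℕ, ℝ) i = 0 ∨ (v' : ∀ _ : ℕ, ℝ) i = 0 := by
      intro i
      by_cases hi : i < N
      · right; simp [v', lp.coeFn_sub, headLp_apply, hi]
      · left; simp [u, headLp_apply, hi]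
    have e1 : ‖u + v'‖ ^ q = ‖u‖ ^ q + ‖v'‖ ^ q := hdisj u v' hdisj1
    have hy : y = u + u' := by simp [u, u']
    have hyn : ys n = v + v' := by simp [v, v']
    have hdec : y + ys n = (u + v') + (u' + v) := by rw [hy, hyn]; abel
    have hDn : ‖(y + ys n) - (u + v')‖ ≤ ‖u'‖ + ‖v‖ := by
      rw [hdec, add_sub_cancel_left]
      exact norm_add_le _ _
    have huvq : ‖u + v'‖ = (‖u‖ ^ q + ‖v'‖ ^ q) ^ (1 / q) := by
      rw [← e1, my_rpow_rpow_inv hq0.ne' (norm_nonneg _)]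
    have hsy := hsplit y N
    have hsyn := hsplit (ys n) N
    -- ‖u+v'‖ ≤ g n
    have hle1 : ‖u + v'‖ ≤ g n := by
      rw [huvq, hg]
      refine Real.rpow_le_rpow (by positivity) ?_ (by positivity)
      have h1 : ‖u‖ ^ q ≤ ‖y‖ ^ q := by
        rw [hsy]; nlinarith [Real.rpow_nonneg (norm_nonneg u') q]
      have h2 : ‖v'‖ ^ q ≤ ‖ys n‖ ^ q := by
        rw [hsyn]; nlinarith [Real.rpow_nonneg (norm_nonneg v) q]
      linarith
    -- g n ≤ ‖u+v'‖ + (‖u'‖ + ‖v‖)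
    have hle2 : g n ≤ ‖u + v'‖ + (‖u'‖ + ‖v‖) := by
      have hsum : ‖y‖ ^ q + ‖ys n‖ ^ q
          = (‖u‖ ^ q + ‖v'‖ ^ q) + (‖u'‖ ^ q + ‖v‖ ^ q) := by
        rw [hsy, hsyn]; ring
      have h3 : g n ≤ (‖u‖ ^ q + ‖v'‖ ^ q) ^ (1/q) + (‖u'‖ ^ q + ‖v‖ ^ q) ^ (1/q) := by
        rw [hg]
        simp only
        rw [hsum]
        exact my_rpow_add_le_add_rpow (by positivity) (by
            rw [div_le_one hq0]; exact hq1) (by positivity) (by positivity)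
      have h4 : (‖u'‖ ^ q + ‖v‖ ^ q) ^ (1/q) ≤ ‖u'‖ + ‖v‖ :=
        my_rpow_add_rpow_le_add hq1 (norm_nonneg _) (norm_nonneg _)
      rw [huvq]
      linarith
    have habs : |f n - ‖u + v'‖| ≤ ‖u'‖ + ‖v‖ := by
      rw [hf]
      simp only
      exact (abs_norm_sub_norm_le _ _).trans hDn
    rw [abs_le] at habs
    constructor
    · linarith
    · linarith
  -- boundedness facts
  have hfnonneg : ∀ n, (0:ℝ) ≤ f n := fun n => norm_nonneg _
  have hgnonneg : ∀ n, (0:ℝ) ≤ g n := fun n => Real.rpow_nonneg (by positivity) _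
  have hfbdd : ∀ n, f n ≤ ‖y‖ + C := fun n =>
    (norm_add_le _ _).trans (by linarith [hC n])
  have hgbdd : ∀ n, g n ≤ ‖y‖ + C := fun n => by
    have := my_rpow_add_rpow_le_add hq1 (norm_nonneg y) (norm_nonneg (ys n))
    have h2 := hC n
    calc g n ≤ ‖y‖ + ‖ys n‖ := this
    _ ≤ ‖y‖ + C := by linarith
  have hfb : IsBoundedUnder (· ≤ ·) atTop f := isBoundedUnder_of ⟨‖y‖ + C, hfbdd⟩
  have hgb : IsBoundedUnder (· ≤ ·) atTop g := isBoundedUnder_of ⟨‖y‖ + C, hgbdd⟩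
  have hfb' : IsBoundedUnder (· ≥ ·) atTop f := isBoundedUnder_of ⟨0, hfnonneg⟩
  have hgb' : IsBoundedUnder (· ≥ ·) atTop g := isBoundedUnder_of ⟨0, hgnonneg⟩
  -- ε-approximation of limsups
  have key : ∀ ε : ℝ, 0 < ε → limsup f atTop ≤ limsup g atTop + ε ∧
      limsup g atTop ≤ limsup f atTop + ε := by
    intro ε hε
    obtain ⟨N, hN⟩ := (Metric.tendsto_atTop.1 htail) (ε / 8) (by linarith)
    have hN' : ‖y - headLp p y N‖ < ε / 8 := by
      have := hN N le_rfl
      rwa [Real.dist_eq, sub_zero, abs_of_nonneg (norm_nonneg _)] at this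
    have hev : ∀ᶠ n in atTop, ‖headLp p (ys n) N‖ < ε / 8 := by
      have := (Metric.tendsto_atTop.1 (hheadys N)) (ε / 8) (by linarith)
      obtain ⟨M, hM⟩ := this
      refine eventually_atTop.2 ⟨M, fun n hn => ?_⟩
      have := hM n hn
      rwa [Real.dist_eq, sub_zero, abs_of_nonneg (norm_nonneg _)] at this
    have hev1 : ∀ᶠ n in atTop, f n ≤ g n + ε := by
      filter_upwards [hev] with n hn
      have := (hmain N n).1
      linarith
    have hev2 : ∀ᶠ n in atTop, g n ≤ f n + ε := by
      filter_upwards [hev] with n hn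
      have := (hmain N n).2
      linarith
    have hgebdd : IsBoundedUnder (· ≤ ·) atTop (fun n => g n + ε) :=
      isBoundedUnder_of ⟨‖y‖ + C + ε, fun n => by linarith [hgbdd n]⟩
    have hfebdd : IsBoundedUnder (· ≤ ·) atTop (fun n => f n + ε) :=
      isBoundedUnder_of ⟨‖y‖ + C + ε, fun n => by linarith [hfbdd n]⟩
    constructor
    · calc limsup f atTop ≤ limsup (fun n => g n + ε) atTop :=
            limsup_le_limsup hev1 hfb'.isCoboundedUnder_le hgebdd
        _ = limsup g atTop + ε := limsup_add_const atTop g ε hgb hgb'.isCoboundedUnder_le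
    · calc limsup g atTop ≤ limsup (fun n => f n + ε) atTop :=
            limsup_le_limsup hev2 hgb'.isCoboundedUnder_le hfebdd
        _ = limsup f atTop + ε := limsup_add_const atTop f ε hfb hfb'.isCoboundedUnder_le
  have h1 : limsup f atTop = limsup g atTop := by
    have h := key
    by_contra hne
    rcases lt_or_gt_of_ne hne with hlt | hlt
    · have := (h ((limsup g atTop - limsup f atTop) / 2) (by linarith)).2
      linarith
    · have := (h ((limsup f atTop - limsup g atTop) / 2) (by linarith)).1
      linarith
  exact h1

end
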